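/- (Bernstein's inequality for Legendre polynomials, as used) For every m ≥ 1 and every t ∈ [−1,1], the m-th Legendre polynomial satisfies |P_m(t)| ≤ min{1, √(2/(πm)) · (1 − t²)^{-1/4}} (with the second bound interpreted as +∞ at t = ±1). -/

import Mathlib

open Polynomial Real Filter Topology

/-- The `m`-th Legendre polynomial, via the Rodrigues formula
`P_m = (2^m m!)⁻¹ (d/dx)^m (x² - 1)^m`, normalized so that `P_m(1) = 1`. -/
noncomputable def legendre (m : ℕ) : Polynomial ℝ :=
  (((2 : ℝ) ^ m * (m.factorial : ℝ))⁻¹) •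
    (derivative^[m] (((X : Polynomial ℝ) ^ 2 - 1) ^ m))

lemma legendre_eq (m : ℕ) : legendre m
    = C (((2 : ℝ) ^ m * (m.factorial : ℝ))⁻¹) * (derivative^[m] (((X : Polynomial ℝ) ^ 2 - 1) ^ m)) := by
  rw [legendre, smul_eq_C_mul]

lemma iter_deriv_add (n : ℕ) : ∀ (p q : Polynomial ℝ),
    derivative^[n] (p + q) = derivative^[n] p + derivative^[n] q := by
  induction n with
  | zero => intro p q; simp
  | succ n ih => intro p q; rw [Function.iterate_succ_apply, derivative_add, ih,
      Function.iterate_succ_apply, Function.iterate_succ_apply]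

lemma iter_deriv_root (a : ℝ) : ∀ (n : ℕ) (p : Polynomial ℝ),
    eval a (derivative^[n] ((X - C a) ^ (n+1) * p)) = 0 := by
  intro n
  induction n with
  | zero => intro p; simp
  | succ n ih =>
    intro p
    rw [Function.iterate_succ_apply, derivative_mul, derivative_pow]
    have h1 : derivative (X - C a) = 1 := by simp
    rw [h1, mul_one]
    have h2 : C (↑(n + 1 + 1) : ℝ) * (X - C a) ^ (n + 1 + 1 - 1) * p
        + (X - C a) ^ (n + 1 + 1) * derivative p
        = (X - C a) ^ (n+1) * (C (↑(n + 1 + 1) : ℝ) * p + (X - C a) * derivative p) := by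
      rw [show n + 1 + 1 - 1 = n + 1 from rfl]; ring
    rw [h2, ih]

lemma iter_deriv_eval_root (a : ℝ) : ∀ (n : ℕ) (p : Polynomial ℝ),
    eval a (derivative^[n] ((X - C a) ^ n * p)) = (n.factorial : ℝ) * eval a p := by
  intro n
  induction n with
  | zero => intro p; simp
  | succ n ih =>
    intro p
    rw [Function.iterate_succ_apply, derivative_mul, derivative_pow]
    have h1 : derivative (X - C a) = 1 := by simp
    rw [h1, mul_one]
    have h2 : C (↑(n + 1) : ℝ) * (X - C a) ^ (n + 1 - 1) * p + (X - C a) ^ (n + 1) * derivative p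
        = ((X - C a) ^ n * (C (↑(n+1) : ℝ) * p)) + ((X - C a) ^ (n+1) * derivative p) := by
      rw [show n + 1 - 1 = n from rfl]; ring
    rw [h2, iter_deriv_add, eval_add, ih, iter_deriv_root]
    simp [Nat.factorial_succ]
    ring

lemma legendre_eval_one (m : ℕ) : (legendre m).eval 1 = 1 := by
  have h : ((X : Polynomial ℝ)^2 - 1)^m = (X - C 1)^m * (X + 1)^m := by
    rw [← mul_pow]; congr 1; simp; ring
  rw [legendre, eval_smul, h, iter_deriv_eval_root]
  have : eval 1 ((X + 1 : Polynomial ℝ) ^ m) = 2^m := by simp; norm_num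
  rw [this]
  have h2 : ((2:ℝ)^m * m.factorial) ≠ 0 := by positivity
  field_simp
  rw [smul_eq_mul, one_div, inv_mul_cancel₀ h2]

lemma legendre_eval_neg_one (m : ℕ) : (legendre m).eval (-1) = (-1)^m := by
  have h : ((X : Polynomial ℝ)^2 - 1)^m = (X - C (-1))^m * (X - 1)^m := by
    rw [← mul_pow]; congr 1; simp; ring
  rw [legendre, eval_smul, h, iter_deriv_eval_root]
  have : eval (-1) ((X - 1 : Polynomial ℝ) ^ m) = (-2)^m := by simp; norm_num
  rw [this]
  have h2 : ((2:ℝ)^m * m.factorial) ≠ 0 := by positivity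
  rw [smul_eq_mul, neg_pow (2:ℝ)]
  field_simp


-- parity
lemma iter_deriv_comp_neg (n : ℕ) : ∀ (p : Polynomial ℝ),
    derivative^[n] (p.comp (-X)) = C ((-1:ℝ)^n) * ((derivative^[n] p).comp (-X)) := by
  induction n with
  | zero => intro p; simp
  | succ n ih =>
    intro p
    have h1 : derivative (p.comp (-X)) = C (-1:ℝ) * ((derivative p).comp (-X)) := by
      rw [derivative_comp]
      simp
    rw [Function.iterate_succ_apply, h1, iterate_derivative_C_mul, ih (derivative p),
      ← Function.iterate_succ_apply]
    rw [← mul_assoc, ← C_mul]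
    congr 2
    rw [pow_succ]
    ring

lemma legendre_comp_neg (m : ℕ) :
    (legendre m).comp (-X) = C ((-1:ℝ)^m) * legendre m := by
  have hu : (((X : Polynomial ℝ)^2 - 1)^m).comp (-X) = ((X : Polynomial ℝ)^2 - 1)^m := by
    rw [pow_comp, sub_comp, pow_comp, X_comp, one_comp]
    ring_nf
  have h := iter_deriv_comp_neg m (((X : Polynomial ℝ)^2 - 1)^m)
  rw [hu] at h
  have hsq : C ((-1:ℝ)^m) * C ((-1:ℝ)^m) = 1 := by
    rw [← C_mul, ← pow_add, Even.neg_one_pow ⟨m, rfl⟩, C_1]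
  have h3 : ((derivative^[m] (((X : Polynomial ℝ)^2 - 1)^m)).comp (-X))
      = C ((-1:ℝ)^m) * derivative^[m] (((X : Polynomial ℝ)^2 - 1)^m) := by
    calc ((derivative^[m] (((X : Polynomial ℝ)^2 - 1)^m)).comp (-X))
        = (C ((-1:ℝ)^m) * C ((-1:ℝ)^m)) * ((derivative^[m] (((X : Polynomial ℝ)^2 - 1)^m)).comp (-X)) := by
          rw [hsq, one_mul]
      _ = C ((-1:ℝ)^m) * (C ((-1:ℝ)^m) * ((derivative^[m] (((X : Polynomial ℝ)^2 - 1)^m)).comp (-X))) := by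
          ring
      _ = C ((-1:ℝ)^m) * derivative^[m] (((X : Polynomial ℝ)^2 - 1)^m) := by rw [← h]
  rw [legendre_eq, mul_comp, C_comp, h3]
  ring

lemma legendre_eval_neg (m : ℕ) (x : ℝ) :
    (legendre m).eval (-x) = (-1)^m * (legendre m).eval x := by
  have h := congrArg (eval x) (legendre_comp_neg m)
  rw [eval_comp, eval_mul, eval_C] at h
  simpa using h

lemma legendre_deriv_comp_neg (m : ℕ) :
    (derivative (legendre m)).comp (-X) = C ((-1:ℝ)^(m+1)) * derivative (legendre m) := by
  have h := congrArg derivative (legendre_comp_neg m)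
  rw [derivative_comp, derivative_C_mul] at h
  simp only [derivative_neg, derivative_X] at h
  have h2 : (-1 : Polynomial ℝ) * ((-1 : Polynomial ℝ) * (derivative (legendre m)).comp (-X))
      = (-1 : Polynomial ℝ) * (C ((-1:ℝ)^m) * derivative (legendre m)) := by
    rw [h]
  calc (derivative (legendre m)).comp (-X)
      = (-1 : Polynomial ℝ) * ((-1 : Polynomial ℝ) * (derivative (legendre m)).comp (-X)) := by ring
    _ = (-1 : Polynomial ℝ) * (C ((-1:ℝ)^m) * derivative (legendre m)) := h2
    _ = C ((-1:ℝ)^(m+1)) * derivative (legendre m) := by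
        rw [pow_succ]
        simp only [C_mul, map_neg, map_one]
        ring

lemma legendre_deriv_eval_neg (m : ℕ) (x : ℝ) :
    (derivative (legendre m)).eval (-x) = (-1)^(m+1) * (derivative (legendre m)).eval x := by
  have h := congrArg (eval x) (legendre_deriv_comp_neg m)
  rw [eval_comp, eval_mul, eval_C] at h
  simpa using h

-- ODE
lemma iter_deriv_X_mul (n : ℕ) : ∀ (p : Polynomial ℝ),
    derivative^[n+1] (X * p) = X * derivative^[n+1] p + ((n:Polynomial ℝ)+1) * derivative^[n] p := by
  induction n with
  | zero =>
    intro p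
    simp [derivative_mul]
    ring
  | succ n ih =>
    intro p
    have h1 : derivative (X * p) = X * derivative p + p := by simp [derivative_mul]; ring
    rw [Function.iterate_succ_apply, h1, iter_deriv_add, ih (derivative p),
      ← Function.iterate_succ_apply derivative (n+1) p,
      ← Function.iterate_succ_apply derivative n p]
    simp only [show n+1+1 = n+2 from rfl]
    push_cast
    ring

lemma iter_deriv_sq_mul (n : ℕ) : ∀ (p : Polynomial ℝ),
    derivative^[n+1] ((X^2 - 1) * derivative p)
      = (X^2 - 1) * derivative^[n+2] p + (2*((n:Polynomial ℝ)+1)) * (X * derivative^[n+1] p)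
        + ((n:Polynomial ℝ)*((n:Polynomial ℝ)+1)) * derivative^[n] p := by
  induction n with
  | zero =>
    intro p
    simp only [zero_add, Function.iterate_one, Nat.cast_zero]
    rw [derivative_mul]
    simp only [derivative_sub, derivative_pow, derivative_X, derivative_one]
    rw [show derivative^[2] p = derivative (derivative p) from rfl]
    simp only [C_eq_natCast]
    push_cast
    ring
  | succ n ih =>
    intro p
    rw [show n+1+1 = (n+1)+1 from rfl, Function.iterate_succ_apply' derivative (n+1), ih p]
    have e1 : derivative ((X^2-1 : Polynomial ℝ) * derivative^[n+2] p)
        = (X^2-1) * derivative^[n+3] p + 2*X*derivative^[n+2] p := by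
      rw [derivative_mul, show n+3 = (n+2)+1 from rfl, Function.iterate_succ_apply' derivative (n+2) p]
      simp only [derivative_sub, derivative_pow, derivative_X, derivative_one, C_eq_natCast]
      push_cast
      ring
    have e2 : derivative ((2*((n:Polynomial ℝ)+1)) * (X * derivative^[n+1] p))
        = (2*((n:Polynomial ℝ)+1)) * (derivative^[n+1] p + X * derivative^[n+2] p) := by
      rw [derivative_mul, derivative_mul, show n+2 = (n+1)+1 from rfl,
        Function.iterate_succ_apply' derivative (n+1) p]
      simp only [derivative_mul, derivative_add, derivative_one, derivative_natCast, derivative_X,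
        C_eq_natCast, derivative_ofNat]
      ring
    have e3 : derivative (((n:Polynomial ℝ)*((n:Polynomial ℝ)+1)) * derivative^[n] p)
        = ((n:Polynomial ℝ)*((n:Polynomial ℝ)+1)) * derivative^[n+1] p := by
      rw [derivative_mul, Function.iterate_succ_apply' derivative n p]
      simp only [derivative_mul, derivative_add, derivative_one, derivative_natCast]
      ring
    rw [derivative_add, derivative_add, e1, e2, e3]
    simp only [show n+1+2 = n+3 from rfl, show n+1+1 = n+2 from rfl]
    push_cast
    ring

lemma base_identity (m : ℕ) :
    (X^2 - 1 : Polynomial ℝ) * derivative (((X:Polynomial ℝ)^2-1)^m)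
      = C (2*(m:ℝ)) * (X * ((X:Polynomial ℝ)^2-1)^m) := by
  induction m with
  | zero => simp
  | succ m ih =>
    rw [pow_succ ((X:Polynomial ℝ)^2 - 1) m, derivative_mul]
    rw [show derivative ((X:Polynomial ℝ)^2 - 1) = 2*X from by simp [map_ofNat]; norm_num]
    simp only [C_mul, C_eq_natCast, map_ofNat] at ih ⊢
    push_cast at ih ⊢
    linear_combination (X^2 - 1 : Polynomial ℝ) * ih

lemma legendre_ODE (m : ℕ) :
    (X^2 - 1 : Polynomial ℝ) * derivative (derivative (legendre m)) + 2 * X * derivative (legendre m)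
      = ((m:Polynomial ℝ) * ((m:Polynomial ℝ)+1)) * legendre m := by
  have h := congrArg (derivative^[m+1]) (base_identity m)
  rw [iter_deriv_sq_mul m (((X:Polynomial ℝ)^2-1)^m), iterate_derivative_C_mul,
    iter_deriv_X_mul m (((X:Polynomial ℝ)^2-1)^m)] at h
  simp only [C_mul, C_eq_natCast, map_ofNat] at h
  rw [legendre_eq, derivative_C_mul, derivative_C_mul,
    ← Function.iterate_succ_apply' derivative m, ← Function.iterate_succ_apply' derivative (m+1)]
  rw [show m+2 = m+1+1 from rfl] at h
  linear_combination (C (((2 : ℝ) ^ m * (m.factorial : ℝ))⁻¹)) * h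

lemma legendre_ODE_eval (m : ℕ) (x : ℝ) :
    (x^2 - 1) * (derivative (derivative (legendre m))).eval x
        + 2 * x * (derivative (legendre m)).eval x
      = ((m:ℝ) * ((m:ℝ)+1)) * (legendre m).eval x := by
  have h := congrArg (eval x) (legendre_ODE m)
  simpa using h

-- values at zero
lemma eval_zero_iter_deriv (p : Polynomial ℝ) (n : ℕ) :
    eval 0 (derivative^[n] p) = (n.factorial : ℝ) * p.coeff n := by
  rw [← coeff_zero_eq_eval_zero, coeff_iterate_derivative]
  simp [Nat.descFactorial_self, nsmul_eq_mul]

lemma coeff_usq (m k : ℕ) (hk : k ≤ m) :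
    ((((X:Polynomial ℝ)^2)-1)^m).coeff (2*k) = (-1)^(m-k) * (m.choose k : ℝ) := by
  have hs : (((X:Polynomial ℝ)^2)-1)^m
      = ∑ j ∈ Finset.range (m+1), C ((-1:ℝ)^(m-j) * (m.choose j : ℝ)) * X^(2*j) := by
    rw [sub_eq_add_neg, Commute.add_pow (Commute.all _ _)]
    apply Finset.sum_congr rfl
    intro j hj
    rw [← pow_mul]
    simp only [C_mul, map_pow, C_neg, C_1, map_natCast]
    ring
  rw [hs, finset_sum_coeff]
  rw [Finset.sum_eq_single k]
  · rw [coeff_C_mul, coeff_X_pow, if_pos rfl, mul_one]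
  · intro j hj hne
    rw [coeff_C_mul, coeff_X_pow, if_neg (by omega), mul_zero]
  · intro h
    exact absurd (Finset.mem_range.mpr (by omega)) h

lemma legendre_eval_zero_even (r : ℕ) :
    (legendre (2*r)).eval 0 = (-1)^r * (Nat.centralBinom r : ℝ) / 4^r := by
  rw [legendre_eq, eval_mul, eval_C, eval_zero_iter_deriv, coeff_usq (2*r) r (by omega)]
  rw [show 2*r - r = r from by omega, Nat.centralBinom]
  have h2 : ((2:ℝ)^(2*r) * ((2*r).factorial : ℝ)) ≠ 0 := by positivity
  field_simp
  rw [show (2:ℝ)^(2*r) = 4^r from by rw [pow_mul]; norm_num]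
  ring

lemma legendre_deriv_eval_zero_odd (r : ℕ) :
    (derivative (legendre (2*r+1))).eval 0
      = (-1)^r * ((2*r+1 : ℕ) : ℝ) * (Nat.centralBinom r : ℝ) / 4^r := by
  have hnat : ((2*r+1+1) : ℕ) * Nat.choose (2*r+1) (r+1) = 2*(2*r+1) * Nat.centralBinom r := by
    have h1 : Nat.choose (2*r+1) r = Nat.choose (2*r+1) (r+1) := by
      rw [← Nat.choose_symm (by omega : r + 1 ≤ 2*r+1), show 2*r+1 - (r+1) = r from by omega]
    have h2 : Nat.centralBinom (r+1) = Nat.choose (2*r+1) r + Nat.choose (2*r+1) (r+1) := by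
      rw [Nat.centralBinom, show 2*(r+1) = (2*r+1)+1 from by omega, Nat.choose_succ_succ']
    have h3 := Nat.succ_mul_centralBinom_succ r
    calc (2*r+1+1) * (2*r+1).choose (r+1)
        = (r+1) * ((2*r+1).choose r + (2*r+1).choose (r+1)) := by rw [h1]; ring
      _ = (r+1) * Nat.centralBinom (r+1) := by rw [h2]
      _ = 2*(2*r+1)*Nat.centralBinom r := h3
  rw [legendre_eq, derivative_C_mul, ← Function.iterate_succ_apply' derivative (2*r+1)]
  rw [eval_mul, eval_C, eval_zero_iter_deriv]
  simp only [Nat.succ_eq_add_one]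
  rw [show 2*r+1+1 = 2*(r+1) from by omega, coeff_usq (2*r+1) (r+1) (by omega)]
  rw [show 2*r+1 - (r+1) = r from by omega]
  have h2 : ((2:ℝ)^(2*r+1) * ((2*r+1).factorial : ℝ)) ≠ 0 := by positivity
  have hfac : (((2*(r+1)).factorial : ℝ)) = ((2*r+1+1) : ℕ) * ((2*r+1).factorial : ℝ) := by
    rw [show 2*(r+1) = (2*r+1)+1 from by omega, Nat.factorial_succ]
    push_cast; ring
  rw [hfac]
  have this := congrArg (Nat.cast (R := ℝ)) hnat
  push_cast at this
  suffices h : ((2:ℝ)^(2*r+1) * ((2*r+1).factorial:ℝ))⁻¹ * (((2*r+1+1:ℕ):ℝ) * ((2*r+1).factorial:ℝ) * (((2*r+1).choose (r+1) : ℕ) : ℝ)) = ((2*r+1:ℕ):ℝ) * (Nat.centralBinom r : ℝ) / 4^r by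
    push_cast at h ⊢
    linear_combination ((-1:ℝ))^r * h
  rw [show (2:ℝ)^(2*r+1) = 2 * 4^r from by rw [pow_succ']; congr 1; rw [pow_mul]; norm_num]
  have hf : ((2*r+1).factorial:ℝ) ≠ 0 := by positivity
  field_simp
  push_cast
  linear_combination this

noncomputable def cb (r : ℕ) : ℝ := (Nat.centralBinom r : ℝ) / 4^r

lemma cb_pos (r : ℕ) : 0 < cb r :=
  div_pos (by exact_mod_cast Nat.centralBinom_pos r) (by positivity)

lemma cb_succ (r : ℕ) : cb (r+1) = cb r * (2*r+1) / (2*r+2) := by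
  have h := congrArg (Nat.cast (R := ℝ)) (Nat.succ_mul_centralBinom_succ r)
  push_cast at h
  unfold cb
  push_cast
  rw [pow_succ]
  have h1 : ((r:ℝ)+1) ≠ 0 := by positivity
  have h4 : ((4:ℝ)^r) ≠ 0 := by positivity
  field_simp
  linear_combination 2 * h

noncomputable def aseq (r : ℕ) : ℝ := π * ((r:ℝ) + 4⁻¹) * (cb r)^2

lemma aseq_mono : Monotone aseq := by
  apply monotone_nat_of_le_succ
  intro r
  have hd : (0:ℝ) < (2*(r:ℝ)+2)^2 := by positivity
  have e : cb (r+1) ^ 2 * (2*(r:ℝ)+2)^2 = cb r^2 * (2*(r:ℝ)+1)^2 := by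
    rw [cb_succ]
    field_simp
  unfold aseq
  push_cast
  have key : π * ((r:ℝ)+1+4⁻¹) * (cb (r+1)^2 * (2*(r:ℝ)+2)^2)
      - π * ((r:ℝ)+4⁻¹) * (cb r^2 * (2*(r:ℝ)+2)^2) = π * cb r^2 * 4⁻¹ := by
    rw [e]; ring
  have h2 : 0 ≤ π * cb r^2 * 4⁻¹ := by positivity
  nlinarith [key, hd, h2]

lemma cb_W (r : ℕ) : cb r ^ 2 * (2*(r:ℝ)+1) * Real.Wallis.W r = 1 := by
  have hcb : (Nat.centralBinom r : ℝ) * (r.factorial : ℝ) * (r.factorial : ℝ)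
      = ((2*r).factorial : ℝ) := by
    have := Nat.choose_mul_factorial_mul_factorial (show r ≤ 2*r by omega)
    rw [show 2*r - r = r from by omega] at this
    exact_mod_cast congrArg (Nat.cast (R := ℝ)) this
  rw [Real.Wallis.W_eq_factorial_ratio]
  unfold cb
  have h1 : ((2*r).factorial : ℝ) ≠ 0 := by positivity
  have h2 : ((r).factorial : ℝ) ≠ 0 := by positivity
  have h3 : (2*(r:ℝ)+1) ≠ 0 := by positivity
  have h5 : ((2:ℝ)^(4*r)) = ((4:ℝ)^r)^2 := by
    rw [show (4:ℝ) = 2^2 from by norm_num, ← pow_mul, ← pow_mul]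
    congr 1
    ring
  field_simp
  rw [h5]
  linear_combination (((4:ℝ)^r)^2
    * ((Nat.centralBinom r : ℝ) * (r.factorial:ℝ) * (r.factorial:ℝ) + ((2*r).factorial : ℝ))) * hcb

lemma aseq_tendsto : Tendsto aseq atTop (𝓝 1) := by
  have hW := Real.Wallis.tendsto_W_nhds_pi_div_two
  have heq : aseq = fun r => ((π/2) / Real.Wallis.W r) * ((2*(r:ℝ)+1/2)/(2*(r:ℝ)+1)) := by
    funext r
    have hw : Real.Wallis.W r ≠ 0 := ne_of_gt (Real.Wallis.W_pos r)
    have h3 : (2*(r:ℝ)+1) ≠ 0 := by positivity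
    have := cb_W r
    unfold aseq
    field_simp
    linear_combination (4*((r:ℝ)*4+1)) * this
  rw [heq]
  have l1 : Tendsto (fun r : ℕ => (π/2) / Real.Wallis.W r) atTop (𝓝 1) := by
    have hne : (π/2) ≠ 0 := by positivity
    have := Tendsto.div (tendsto_const_nhds (x := π/2) (f := atTop (α := ℕ))) hW hne
    rw [div_self hne] at this
    exact this
  have l2 : Tendsto (fun r : ℕ => (2*(r:ℝ)+1/2)/(2*(r:ℝ)+1)) atTop (𝓝 1) := by
    have h : ∀ r : ℕ, (2*(r:ℝ)+1/2)/(2*(r:ℝ)+1) = 1 - (1/2)/(2*(r:ℝ)+1) := by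
      intro r
      have h3 : (2*(r:ℝ)+1) ≠ 0 := by positivity
      field_simp
      ring
    simp_rw [h]
    have : Tendsto (fun r : ℕ => (1/2) / (2*(r:ℝ)+1)) atTop (𝓝 0) := by
      apply Tendsto.div_atTop tendsto_const_nhds
      apply Tendsto.atTop_add _ tendsto_const_nhds
      exact (tendsto_natCast_atTop_atTop).const_mul_atTop two_pos
    simpa using (tendsto_const_nhds (x := (1:ℝ))).sub this
  simpa using l1.mul l2

lemma aseq_le_one (r : ℕ) : aseq r ≤ 1 := aseq_mono.ge_of_tendsto aseq_tendsto r

section part1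
variable (m : ℕ)

noncomputable def gfun : ℝ → ℝ := fun x =>
  ((m:ℝ) * ((m:ℝ)+1)) * ((legendre m).eval x * (legendre m).eval x)
    + (1-x^2) * ((derivative (legendre m)).eval x * (derivative (legendre m)).eval x)

lemma hasDerivAt_gfun (x : ℝ) :
    HasDerivAt (gfun m) (2*x*((derivative (legendre m)).eval x)^2) x := by
  have h1 := Polynomial.hasDerivAt (legendre m) x
  have h2 := Polynomial.hasDerivAt (derivative (legendre m)) x
  have hs : HasDerivAt (fun y : ℝ => 1 - y^2) (-(2*x)) x := by
    simpa using ((hasDerivAt_pow 2 x).const_sub 1)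
  have hg := ((h1.mul h1).const_mul ((m:ℝ) * ((m:ℝ)+1))).add (hs.mul (h2.mul h2))
  refine hg.congr_deriv (Eq.symm ?_)
  simp only [Pi.mul_apply]
  linear_combination (2 * (derivative (legendre m)).eval x) * legendre_ODE_eval m x

lemma gfun_mono : MonotoneOn (gfun m) (Set.Icc 0 1) := by
  apply monotoneOn_of_deriv_nonneg (convex_Icc 0 1)
  · exact fun x _ => (hasDerivAt_gfun m x).continuousAt.continuousWithinAt
  · exact fun x _ => ((hasDerivAt_gfun m x).differentiableAt).differentiableWithinAt
  · intro x hx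
    rw [interior_Icc] at hx
    rw [(hasDerivAt_gfun m x).deriv]
    have := hx.1
    positivity

lemma legendre_abs_le_one (hm : 1 ≤ m) (t : ℝ) (ht : t ∈ Set.Icc (-1:ℝ) 1) :
    |(legendre m).eval t| ≤ 1 := by
  have hM : (0:ℝ) < (m:ℝ) * ((m:ℝ)+1) := by
    have : (1:ℝ) ≤ (m:ℝ) := by exact_mod_cast hm
    nlinarith
  have key : ∀ x ∈ Set.Icc (0:ℝ) 1, |(legendre m).eval x| ≤ 1 := by
    intro x hx
    have h1 := gfun_mono m hx (Set.mem_Icc.mpr ⟨zero_le_one, le_refl 1⟩) hx.2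
    have h2 : gfun m 1 = (m:ℝ) * ((m:ℝ)+1) := by
      unfold gfun
      rw [legendre_eval_one]
      ring
    have h3 : (m:ℝ) * ((m:ℝ)+1) * ((legendre m).eval x * (legendre m).eval x)
        ≤ gfun m x := by
      unfold gfun
      have hs : (0:ℝ) ≤ 1 - x^2 := by nlinarith [hx.1, hx.2]
      nlinarith [mul_nonneg hs (mul_self_nonneg ((derivative (legendre m)).eval x))]
    have h4 : (legendre m).eval x * (legendre m).eval x ≤ 1 := by
      rw [h2] at h1
      nlinarith
    rw [← abs_le_one_iff_mul_self_le_one] at h4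
    exact h4
  rcases le_or_gt 0 t with h | h
  · exact key t ⟨h, ht.2⟩
  · have := key (-t) ⟨by linarith, by linarith [ht.1]⟩
    rw [legendre_eval_neg] at this
    rw [abs_mul, abs_pow, abs_neg, abs_one, one_pow, one_mul] at this
    exact this

end part1

namespace Bern
variable (m : ℕ)

noncomputable def P : ℝ → ℝ := fun x => (legendre m).eval x
noncomputable def P1 : ℝ → ℝ := fun x => (derivative (legendre m)).eval x
noncomputable def Mc : ℝ := (m:ℝ)*((m:ℝ)+1)
noncomputable def dd : ℝ → ℝ := fun x => (2*(m:ℝ)+1)^2*(1-x^2)+1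
noncomputable def w : ℝ → ℝ := fun x =>
  (2*(Mc m)*(1-x^2)+1)*(P m x*P m x) - 2*x*(1-x^2)*(P m x*P1 m x)
    + 2*((1-x^2)*(1-x^2))*(P1 m x*P1 m x)
noncomputable def Ffun : ℝ → ℝ := fun x => (4*(1-x^2)*(w m x*w m x))/(dd m x*dd m x)

lemma hasDerivAt_P (x : ℝ) : HasDerivAt (P m) (P1 m x) x := Polynomial.hasDerivAt _ _

lemma hasDerivAt_P1 (x : ℝ) :
    HasDerivAt (P1 m) ((derivative (derivative (legendre m))).eval x) x :=
  Polynomial.hasDerivAt _ _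

lemma hasDerivAt_w (x : ℝ) :
    HasDerivAt (w m)
      (-2*x*(Mc m*(P m x)^2 - x*(P m x)*(P1 m x) + (1-x^2)*(P1 m x)^2)) x := by
  have hP := hasDerivAt_P m x
  have hP1 := hasDerivAt_P1 m x
  have hs : HasDerivAt (fun y : ℝ => 1 - y^2) (-(2*x)) x := by
    simpa using ((hasDerivAt_pow 2 x).const_sub 1)
  have hA : HasDerivAt (fun y => (2*(Mc m)*(1-y^2)+1)*(P m y*P m y))
      ((2*(Mc m)*(-(2*x)))*(P m x*P m x)
        + (2*(Mc m)*(1-x^2)+1)*(P1 m x*P m x + P m x*P1 m x)) x :=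
    (((hs.const_mul (2*Mc m)).add_const 1).mul (hP.mul hP))
  have h2x : HasDerivAt (fun y : ℝ => 2*y*(1-y^2)) (2*(1-x^2) + 2*x*(-(2*x))) x := by
    have := ((hasDerivAt_id x).const_mul 2).mul hs
    exact this.congr_deriv (by simp only [id]; ring)
  have hB : HasDerivAt (fun y => 2*y*(1-y^2)*(P m y*P1 m y))
      ((2*(1-x^2) + 2*x*(-(2*x)))*(P m x*P1 m x)
        + 2*x*(1-x^2)*(P1 m x*P1 m x + P m x*(derivative (derivative (legendre m))).eval x)) x :=
    (h2x.mul (hP.mul hP1))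
  have hC : HasDerivAt (fun y => 2*((1-y^2)*(1-y^2))*(P1 m y*P1 m y))
      ((2*((-(2*x))*(1-x^2) + (1-x^2)*(-(2*x))))*(P1 m x*P1 m x)
        + 2*((1-x^2)*(1-x^2))*((derivative (derivative (legendre m))).eval x*P1 m x
            + P1 m x*(derivative (derivative (legendre m))).eval x)) x :=
    (((hs.mul hs).const_mul 2).mul (hP1.mul hP1))
  have hg := (hA.sub hB).add hC
  refine hg.congr_deriv (Eq.symm ?_)
  have ode := legendre_ODE_eval m x
  unfold P P1 Mc
  linear_combination (-2*x*((legendre m).eval x) + 4*(1-x^2)*((derivative (legendre m)).eval x)) * ode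

lemma two_w_sub (x : ℝ) :
    2 * w m x - dd m x * (P m x)^2 = (x*P m x - 2*(1-x^2)*P1 m x)^2 := by
  unfold w dd Mc
  ring

lemma dd_pos {x : ℝ} (hx : 0 ≤ 1 - x^2) : 0 < dd m x := by
  unfold dd
  nlinarith [sq_nonneg (2*(m:ℝ)+1)]

lemma w_nonneg {x : ℝ} (hx : 0 ≤ 1 - x^2) : 0 ≤ w m x := by
  have h1 := two_w_sub m x
  have h2 := dd_pos m hx
  nlinarith [sq_nonneg (x*P m x - 2*(1-x^2)*P1 m x), sq_nonneg (P m x)]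

lemma hasDerivAt_F {x : ℝ} (hd : dd m x ≠ 0) :
    HasDerivAt (Ffun m)
      ((((-(2*x))*(4*(w m x*w m x))
          + (4*(1-x^2))*((-2*x*(Mc m*(P m x)^2 - x*(P m x)*(P1 m x) + (1-x^2)*(P1 m x)^2))*(w m x)
            + (w m x)*(-2*x*(Mc m*(P m x)^2 - x*(P m x)*(P1 m x) + (1-x^2)*(P1 m x)^2))))
          * (dd m x*dd m x)
        - (4*(1-x^2)*(w m x*w m x))
          * (((2*(m:ℝ)+1)^2*(-(2*x)))*(dd m x) + (dd m x)*((2*(m:ℝ)+1)^2*(-(2*x)))))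
        / (dd m x*dd m x)^2) x := by
  have hs : HasDerivAt (fun y : ℝ => 1 - y^2) (-(2*x)) x := by
    simpa using ((hasDerivAt_pow 2 x).const_sub 1)
  have hw := hasDerivAt_w m x
  have hnum : HasDerivAt (fun y => 4*(1-y^2)*(w m y*w m y))
      ((-(2*x))*(4*(w m x*w m x))
        + (4*(1-x^2))*((-2*x*(Mc m*(P m x)^2 - x*(P m x)*(P1 m x) + (1-x^2)*(P1 m x)^2))*(w m x)
          + (w m x)*(-2*x*(Mc m*(P m x)^2 - x*(P m x)*(P1 m x) + (1-x^2)*(P1 m x)^2)))) x := by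
    have h4s : HasDerivAt (fun y : ℝ => 4*(1-y^2)) (4*(-(2*x))) x := hs.const_mul 4
    have := h4s.mul (hw.mul hw)
    refine this.congr_deriv ?_
    simp only [Pi.mul_apply]
    ring
  have hdd : HasDerivAt (fun y => dd m y * dd m y)
      (((2*(m:ℝ)+1)^2*(-(2*x)))*(dd m x) + (dd m x)*((2*(m:ℝ)+1)^2*(-(2*x)))) x := by
    have hd1 : HasDerivAt (dd m) ((2*(m:ℝ)+1)^2*(-(2*x))) x := by
      unfold dd
      exact (hs.const_mul ((2*(m:ℝ)+1)^2)).add_const 1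
    exact hd1.mul hd1
  have := hnum.div hdd (by exact mul_ne_zero hd hd)
  exact this

lemma deriv_F_nonpos {x : ℝ} (hx0 : 0 ≤ x) (hx1 : x ≤ 1) :
    deriv (Ffun m) x ≤ 0 := by
  have hs : (0:ℝ) ≤ 1 - x^2 := by nlinarith
  have hd := dd_pos m hs
  have hF := hasDerivAt_F m (ne_of_gt hd)
  rw [hF.deriv]
  apply div_nonpos_of_nonpos_of_nonneg _ (by positivity)
  have key : (((-(2*x))*(4*(w m x*w m x))
          + (4*(1-x^2))*((-2*x*(Mc m*(P m x)^2 - x*(P m x)*(P1 m x) + (1-x^2)*(P1 m x)^2))*(w m x)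
            + (w m x)*(-2*x*(Mc m*(P m x)^2 - x*(P m x)*(P1 m x) + (1-x^2)*(P1 m x)^2))))
          * (dd m x*dd m x)
        - (4*(1-x^2)*(w m x*w m x))
          * (((2*(m:ℝ)+1)^2*(-(2*x)))*(dd m x) + (dd m x)*((2*(m:ℝ)+1)^2*(-(2*x)))))
      = -8 * x * (w m x) * (dd m x) * (x*P m x - 2*(1-x^2)*P1 m x)^2 := by
    unfold w dd Mc
    ring
  rw [key]
  have hw := w_nonneg m hs
  have : (0:ℝ) ≤ 8 * x * (w m x) * (dd m x) * (x*P m x - 2*(1-x^2)*P1 m x)^2 := by positivity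
  linarith

lemma F_antitone : AntitoneOn (Ffun m) (Set.Icc 0 1) := by
  apply antitoneOn_of_deriv_nonpos (convex_Icc 0 1)
  · intro x hx
    have hs : (0:ℝ) ≤ 1 - x^2 := by
      rcases hx with ⟨h1, h2⟩; nlinarith
    exact (hasDerivAt_F m (ne_of_gt (dd_pos m hs))).continuousAt.continuousWithinAt
  · intro x hx
    rw [interior_Icc] at hx
    have hs : (0:ℝ) ≤ 1 - x^2 := by nlinarith [hx.1, hx.2]
    exact (hasDerivAt_F m (ne_of_gt (dd_pos m hs))).differentiableAt.differentiableWithinAt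
  · intro x hx
    rw [interior_Icc] at hx
    exact deriv_F_nonpos m (le_of_lt hx.1) (le_of_lt hx.2)

end Bern



namespace Bern
variable (m : ℕ)


lemma bern_sq {t : ℝ} (h0 : 0 ≤ t) (h1 : t ≤ 1) :
    Real.sqrt (1-t^2) * (P m t)^2 ≤ 2*(w m 0)/(dd m 0) := by
  have hs : (0:ℝ) ≤ 1 - t^2 := by nlinarith
  have hd := dd_pos m hs
  have hw := w_nonneg m hs
  have hd0 : (0:ℝ) < dd m 0 := dd_pos m (by norm_num)
  have hw0 : (0:ℝ) ≤ w m 0 := w_nonneg m (by norm_num)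
  have hFt : Ffun m t ≤ Ffun m 0 :=
    F_antitone m (Set.mem_Icc.mpr ⟨le_refl 0, zero_le_one⟩) (Set.mem_Icc.mpr ⟨h0, h1⟩) h0
  have hp2d : (P m t)^2 * dd m t ≤ 2*w m t := by
    nlinarith [two_w_sub m t, sq_nonneg (t*P m t - 2*(1-t^2)*P1 m t)]
  have e1 : (Real.sqrt (1-t^2) * (P m t)^2)^2 ≤ Ffun m t := by
    have h_sq : (Real.sqrt (1-t^2) * (P m t)^2)^2 = (1-t^2)*((P m t)^2)^2 := by
      rw [mul_pow, Real.sq_sqrt hs]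
    rw [h_sq]
    unfold Ffun
    rw [le_div_iff₀ (by positivity)]
    have hsq2 : ((P m t)^2 * dd m t)^2 ≤ (2*w m t)^2 :=
      pow_le_pow_left₀ (by positivity) hp2d 2
    nlinarith [mul_le_mul_of_nonneg_left hsq2 hs]
  calc Real.sqrt (1-t^2) * (P m t)^2
      = Real.sqrt ((Real.sqrt (1-t^2) * (P m t)^2)^2) := by
        rw [Real.sqrt_sq (by positivity)]
    _ ≤ Real.sqrt (Ffun m 0) := Real.sqrt_le_sqrt (e1.trans hFt)
    _ = 2*(w m 0)/(dd m 0) := by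
        have hF0 : Ffun m 0 = (2*(w m 0)/(dd m 0))^2 := by
          unfold Ffun
          rw [div_pow]
          norm_num
          rw [show (2*(w m 0))^2 = 4*(w m 0 * w m 0) from by ring,
            show (dd m 0)^2 = dd m 0 * dd m 0 from by ring]
        rw [hF0, Real.sqrt_sq (by positivity)]

lemma V0_le (hm : 1 ≤ m) : 2*(w m 0)/(dd m 0) ≤ 2/(π*m) := by
  have hw0 : w m 0 = (2*(Mc m)+1)*(P m 0*P m 0) + 2*(P1 m 0*P1 m 0) := by
    unfold w; norm_num
  have hd0 : dd m 0 = (2*(m:ℝ)+1)^2+1 := by unfold dd; norm_num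
  have hπ := Real.pi_pos
  have hmR : (1:ℝ) ≤ (m:ℝ) := by exact_mod_cast hm
  have hd0pos : (0:ℝ) < dd m 0 := by rw [hd0]; positivity
  have hπm : (0:ℝ) < π * m := by positivity
  rw [div_le_div_iff₀ hd0pos hπm]
  rcases Nat.even_or_odd m with he | ho
  · obtain ⟨r, hr⟩ := he
    have hm2 : m = 2*r := by omega
    have hr1 : 1 ≤ r := by omega
    have hrR : (1:ℝ) ≤ (r:ℝ) := by exact_mod_cast hr1
    have hp10 : P1 m 0 = 0 := by
      have h := legendre_deriv_eval_neg m 0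
      rw [neg_zero] at h
      have hodd : (-1:ℝ)^(m+1) = -1 := by
        rw [hm2, pow_succ, show ((-1:ℝ))^(2*r) = 1 from by rw [pow_mul]; norm_num]
        ring
      rw [hodd] at h
      unfold P1
      linarith [h]
    have hp0 : P m 0 * P m 0 = cb r * cb r := by
      unfold P
      rw [hm2, legendre_eval_zero_even]
      unfold cb
      rcases Nat.even_or_odd r with her | hor
      · have : ((-1:ℝ))^r = 1 := by
          obtain ⟨k, hk⟩ := her
          rw [show r = 2*k from by omega, pow_mul]; norm_num
        rw [this]; ring
      · have : ((-1:ℝ))^r = -1 := by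
          obtain ⟨k, hk⟩ := hor
          rw [hk, pow_succ, pow_mul]; norm_num
        rw [this]; ring
    rw [hw0, hp10, hp0, hd0]
    have ha := aseq_le_one r
    unfold aseq at ha
    rw [pow_two] at ha
    have hcb := cb_pos r
    have hπc2 : (0:ℝ) ≤ π * (cb r * cb r) * (8*(r:ℝ)^2+4*(r:ℝ)+1) := by positivity
    rw [hm2]
    have hMc : Mc (2*r) = 2*(r:ℝ)*(2*(r:ℝ)+1) := by unfold Mc; push_cast; ring
    rw [hMc]
    push_cast
    nlinarith [hπc2, ha, mul_le_mul_of_nonneg_left ha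
      (show (0:ℝ) ≤ 4*(8*(r:ℝ)^2+4*(r:ℝ)+1) from by positivity)]
  · obtain ⟨r, hr⟩ := ho
    have hp0 : P m 0 = 0 := by
      have h := legendre_eval_neg m 0
      rw [neg_zero] at h
      have hodd : (-1:ℝ)^m = -1 := by
        rw [hr, pow_succ, pow_mul]; norm_num
      rw [hodd] at h
      unfold P
      linarith [h]
    have hp1 : P1 m 0 * P1 m 0 = (2*(r:ℝ)+1)^2 * (cb r * cb r) := by
      unfold P1
      rw [hr, legendre_deriv_eval_zero_odd]
      unfold cb
      push_cast
      rcases Nat.even_or_odd r with her | hor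
      · have : ((-1:ℝ))^r = 1 := by
          obtain ⟨k, hk⟩ := her
          rw [show r = 2*k from by omega, pow_mul]; norm_num
        rw [this]; ring
      · have : ((-1:ℝ))^r = -1 := by
          obtain ⟨k, hk⟩ := hor
          rw [hk, pow_succ, pow_mul]; norm_num
        rw [this]; ring
    rw [hw0, hp0, hp1, hd0, hr]
    have ha := aseq_le_one r
    unfold aseq at ha
    have hcb := cb_pos r
    have hπc2 : (0:ℝ) < π * (cb r * cb r) := by positivity
    push_cast
    rw [pow_two] at ha
    nlinarith [hπc2, ha, mul_le_mul_of_nonneg_left ha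
      (show (0:ℝ) ≤ 4*(2*(r:ℝ)+1)^3 from by positivity), sq_nonneg ((r:ℝ)),
      (show (0:ℝ) < 4*(r:ℝ)+1 from by positivity)]

end Bern

/-- **Bernstein's inequality for Legendre polynomials.** For `m ≥ 1` and `t ∈ [−1,1]`,
`|P_m(t)| ≤ min {1, √(2/(πm)) (1−t²)^{-1/4}}` (the second bound being interpreted as `+∞`
at `t = ±1`). -/
theorem stmt_15 (m : ℕ) (hm : 1 ≤ m) (t : ℝ) (ht : t ∈ Set.Icc (-1 : ℝ) 1) :
    |(legendre m).eval t| ≤ 1 ∧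
      (t ^ 2 < 1 →
        |(legendre m).eval t| ≤
          Real.sqrt (2 / (Real.pi * m)) * (1 - t ^ 2) ^ (-(1 / 4 : ℝ))) := by
  obtain ⟨htl, htr⟩ := ht
  refine ⟨legendre_abs_le_one m hm t (Set.mem_Icc.mpr ⟨htl, htr⟩), fun h2 => ?_⟩
  have hs : (0:ℝ) < 1 - t^2 := by linarith
  have habs : ((legendre m).eval t)^2 = ((legendre m).eval |t|)^2 := by
    rcases abs_cases t with ⟨he, _⟩ | ⟨he, _⟩
    · rw [he]
    · rw [he, legendre_eval_neg, mul_pow,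
        show ((-1:ℝ)^m)^2 = 1 from by rw [← pow_mul, mul_comm, pow_mul]; norm_num, one_mul]
  have h0 : (0:ℝ) ≤ |t| := abs_nonneg t
  have h1 : |t| ≤ 1 := by rw [abs_le]; exact ⟨htl, htr⟩
  have hbs := (Bern.bern_sq m h0 h1).trans (Bern.V0_le m hm)
  rw [sq_abs] at hbs
  simp only [Bern.P] at hbs
  have hsq : ((legendre m).eval t)^2 ≤ (2/(π*m)) / Real.sqrt (1-t^2) := by
    rw [habs, le_div_iff₀ (Real.sqrt_pos.mpr hs)]
    calc ((legendre m).eval |t|)^2 * Real.sqrt (1-t^2)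
        = Real.sqrt (1-t^2) * ((legendre m).eval |t|)^2 := by ring
      _ ≤ 2/(π*m) := hbs
  have hA : (0:ℝ) ≤ 2/(π*m) := by positivity
  calc |(legendre m).eval t|
      = Real.sqrt (((legendre m).eval t)^2) := (Real.sqrt_sq_eq_abs _).symm
    _ ≤ Real.sqrt ((2/(π*m)) / Real.sqrt (1-t^2)) := Real.sqrt_le_sqrt hsq
    _ = Real.sqrt (2/(π*m)) * (1-t^2)^(-(1/4:ℝ)) := by
        rw [show (2/(π*(m:ℝ))) / Real.sqrt (1-t^2)
            = (2/(π*m)) * ((1-t^2)^(-(1/2:ℝ))) from by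
          rw [Real.rpow_neg hs.le, Real.sqrt_eq_rpow]
          ring]
        rw [Real.sqrt_mul hA, show (-(1/4:ℝ)) = (-(1/2:ℝ))*(1/2:ℝ) from by norm_num,
          Real.rpow_mul hs.le, Real.sqrt_eq_rpow, Real.sqrt_eq_rpow]
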